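/- arXiv:2004.05031 — 2 statements merged into one kernel-verified Lean document; each statement's English description precedes it below -/
import Mathlib

section
/- Let 0 < r < 1, x ∈ [0,1), and suppose 2r < x. Then every point w in the pseudohyperbolic disk D_phb(x,r) satisfies |arg w| ≤ arcsin( (r/x)·(1-x²)/(1-r²) ). -/
open Complex Real

set_option maxHeartbeats 1600000

/-- If `0 < r < 1`, `x ∈ [0,1)` and `2r < x`, then every point `w` of the pseudohyperbolic
disk `D_phb(x,r)` satisfies `|arg w| ≤ arcsin((r/x)(1-x²)/(1-r²))`. -/
theorem arg_bound_on_pseudohyperbolic_disk (x r : ℝ) (hr0 : 0 < r) (hr1 : r < 1)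
    (hx1 : x < 1) (hrx : 2 * r < x) (w : ℂ) (hw : ‖w‖ < 1)
    (hmem : ‖((x : ℂ) - w) / (1 - (x : ℂ) * w)‖ < r) :
    |Complex.arg w| ≤ Real.arcsin (r / x * (1 - x ^ 2) / (1 - r ^ 2)) := by
  set u := w.re with hu
  set v := w.im with hv
  have hx0 : 0 < x := lt_trans (by linarith) hrx
  have hrx1 : r * x < 1 := by nlinarith
  have hDpos : 0 < 1 - r ^ 2 * x ^ 2 := by nlinarith [mul_pos hr0 hx0]
  set A := r * (1 - x ^ 2) with hA
  set B := x * (1 - r ^ 2) with hB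
  set D := 1 - r ^ 2 * x ^ 2 with hD
  clear_value u v A B D
  have hApos : 0 < A := by rw [hA]; exact mul_pos hr0 (by nlinarith)
  have hBpos : 0 < B := by rw [hB]; exact mul_pos hx0 (by nlinarith)
  have hAB : A < B := by rw [hA, hB]; nlinarith
  -- translate the membership to a real inequality
  have hbne : (1 : ℂ) - (x : ℂ) * w ≠ 0 := by
    intro h
    have h1 : ‖(x : ℂ) * w‖ < 1 := by
      rw [norm_mul, Complex.norm_real]
      calc |x| * ‖w‖ ≤ 1 * ‖w‖ := by
              apply mul_le_mul_of_nonneg_right _ (norm_nonneg _)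
              rw [abs_le]; constructor <;> linarith
        _ = ‖w‖ := one_mul _
        _ < 1 := hw
    have : (1 : ℂ) = (x : ℂ) * w := by linear_combination h
    rw [← this] at h1
    simp at h1
  have hbpos : 0 < ‖(1 : ℂ) - (x : ℂ) * w‖ := norm_pos_iff.mpr hbne
  have ha : ‖(x : ℂ) - w‖ < r * ‖(1 : ℂ) - (x : ℂ) * w‖ := by
    rw [norm_div] at hmem
    exact (div_lt_iff₀ hbpos).mp hmem
  have e1 : ‖(x : ℂ) - w‖ ^ 2 = (x - u) ^ 2 + v ^ 2 := by
    rw [Complex.sq_norm, Complex.normSq_apply]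
    simp [hu, hv]
    ring
  have e2 : ‖(1 : ℂ) - (x : ℂ) * w‖ ^ 2 = (1 - x * u) ^ 2 + (x * v) ^ 2 := by
    rw [Complex.sq_norm, Complex.normSq_apply]
    simp [hu, hv]
    ring
  have hsq : ‖(x : ℂ) - w‖ ^ 2 < (r * ‖(1 : ℂ) - (x : ℂ) * w‖) ^ 2 :=
    pow_lt_pow_left₀ ha (norm_nonneg _) two_ne_zero
  have hDq : (x - u) ^ 2 + v ^ 2 ≤ r ^ 2 * ((1 - x * u) ^ 2 + (x * v) ^ 2) := by
    rw [e1] at hsq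
    rw [mul_pow, e2] at hsq
    linarith
  -- rearranged form
  have h3 : 0 ≤ r ^ 2 * (1 - x * u) ^ 2 - (x - u) ^ 2 - v ^ 2 * D := by
    rw [hD]; nlinarith [hDq]
  -- the Euclidean disk inequality (scaled by D)
  have hid1 : A ^ 2 - (u * D - B) ^ 2 - v ^ 2 * D ^ 2
      = (r ^ 2 * (1 - x * u) ^ 2 - (x - u) ^ 2 - v ^ 2 * D) * D := by
    rw [hA, hB, hD]; ring
  have hdisk : (u * D - B) ^ 2 + v ^ 2 * D ^ 2 ≤ A ^ 2 := by
    have := mul_nonneg h3 hDpos.le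
    linarith [hid1]
  -- positivity of the real part
  have hA2B2 : A ^ 2 < B ^ 2 := by nlinarith
  have hupos : 0 < u := by
    by_contra h
    push_neg at h
    have huD : u * D ≤ 0 := mul_nonpos_of_nonpos_of_nonneg h hDpos.le
    have hterm : 0 ≤ (-(u * D)) * (2 * B - u * D) :=
      mul_nonneg (by linarith) (by linarith)
    have hexp : (u * D - B) ^ 2 = (-(u * D)) * (2 * B - u * D) + B ^ 2 := by ring
    have hv2 : 0 ≤ v ^ 2 * D ^ 2 := mul_nonneg (sq_nonneg v) (sq_nonneg D)
    linarith [hdisk, hterm, hexp, hv2, hA2B2]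
  -- key inequality
  have hfact1 : 0 ≤ (A ^ 2 + B * (u * D - B)) ^ 2 := sq_nonneg _
  have hfact2 : 0 ≤ (B ^ 2 - A ^ 2) * (A ^ 2 - (u * D - B) ^ 2 - v ^ 2 * D ^ 2) :=
    mul_nonneg (by linarith [hA2B2]) (by linarith [hdisk])
  have hid2 : (A ^ 2 * u ^ 2 - v ^ 2 * (B ^ 2 - A ^ 2)) * D ^ 2
      = (A ^ 2 + B * (u * D - B)) ^ 2
        + (B ^ 2 - A ^ 2) * (A ^ 2 - (u * D - B) ^ 2 - v ^ 2 * D ^ 2) := by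
    ring
  have h8 : 0 ≤ (A ^ 2 * u ^ 2 - v ^ 2 * (B ^ 2 - A ^ 2)) * D ^ 2 := by
    rw [hid2]; exact add_nonneg hfact1 hfact2
  have hD2 : 0 < D ^ 2 := by positivity
  have h9 : 0 ≤ A ^ 2 * u ^ 2 - v ^ 2 * (B ^ 2 - A ^ 2) :=
    nonneg_of_mul_nonneg_left h8 hD2
  have hkey : v ^ 2 * B ^ 2 ≤ A ^ 2 * (u ^ 2 + v ^ 2) := by nlinarith [h9, sq_nonneg v]

  have hwne : w ≠ 0 := by
    intro h
    rw [hu, h] at hupos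
    simp at hupos
  set m := ‖w‖ with hm
  clear_value m
  have hmpos : 0 < m := by rw [hm]; exact norm_pos_iff.mpr hwne
  have hm2 : m ^ 2 = u ^ 2 + v ^ 2 := by
    rw [hm, Complex.sq_norm, Complex.normSq_apply, ← hu, ← hv]
    ring
  have h5 : |v| * B ≤ A * m := by
    have h6 : (|v| * B) ^ 2 ≤ (A * m) ^ 2 := by
      rw [mul_pow, mul_pow, _root_.sq_abs, hm2]
      exact hkey
    exact le_of_pow_le_pow_left₀ two_ne_zero (by positivity) h6
  set s := A / B with hs
  have hts : |v / m| ≤ s := by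
    rw [abs_div, abs_of_pos hmpos, div_le_iff₀ hmpos, hs, div_mul_eq_mul_div,
      le_div_iff₀ hBpos]
    linarith [h5]
  have hgoal_eq : r / x * (1 - x ^ 2) / (1 - r ^ 2) = s := by
    rw [hs, hA, hB]
    field_simp
  rw [hgoal_eq, Complex.arg_of_re_nonneg (by rw [← hu]; exact hupos.le), ← hv, ← hm, abs_le]
  obtain ⟨hl, hrr⟩ := abs_le.mp hts
  constructor
  · rw [← Real.arcsin_neg]
    exact Real.monotone_arcsin hl
  · exact Real.monotone_arcsin hrr
end

section
/- Fix r ∈ (0,1) and let z_{n,k} = (1-2^{-n})e^{2πik/2^n}. There exists N such that the characteristic functions of the pseudohyperbolic disks D_phb(z_{n,k}, r) satisfy ∑_{n,k} χ_{D_phb(z_{n,k},r)}(z) ≤ N for all z ∈ D. -/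
open Complex MeasureTheory
open scoped ENNReal

/-- The dyadic net `z_{n,k} = (1-2^{-n}) e^{2πik/2^n}` (`0 ≤ k < 2^n`). -/
noncomputable def dyadicNet (p : ℕ × ℕ) : ℂ :=
  ((1 - (2 : ℝ) ^ (-(p.1 : ℤ)) : ℝ) : ℂ) *
    Complex.exp (2 * Real.pi * Complex.I * (p.2 : ℂ) / (2 : ℂ) ^ p.1)

/-- The pseudohyperbolic disk of center `a` and radius `r`. -/
def pseudoDisk (a : ℂ) (r : ℝ) : Set ℂ :=
  {w : ℂ | ‖w‖ < 1 ∧ ‖(a - w) / (1 - (starRingEnd ℂ) a * w)‖ < r}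

/- ---------- auxiliary lemmas ---------- -/

lemma FO.real_arith {r u d A Z : ℝ} (hr0 : 0 < r) (hr1 : r < 1)
    (hA0 : 0 ≤ A) (hA1 : A < 1) (hZ1 : Z < 1)
    (hu_z : 1 - Z ≤ u) (hu_a : 1 - A ≤ u) (hd0 : 0 ≤ d)
    (hdru : d < r * u) (hu_up : u ≤ (1 - A ^ 2) + d)
    (hid : u ^ 2 - d ^ 2 = (1 - A ^ 2) * (1 - Z ^ 2)) (hZ0 : 0 ≤ Z) :
    d < 2 * r / (1 - r) * (1 - A) ∧
    (1 - r ^ 2) / 4 * (1 - Z) < 1 - A ∧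
    (1 - r ^ 2) / 4 * (1 - A) < 1 - Z := by
  have hu0 : 0 < u := by linarith
  have hC : d < 2 * r / (1 - r) * (1 - A) := by
    have h1 : u * (1 - r) < 1 - A ^ 2 := by nlinarith
    have h2 : d * (1 - r) < r * (1 - A ^ 2) := by nlinarith
    rw [div_mul_eq_mul_div, lt_div_iff₀ (by linarith)]
    nlinarith [mul_nonneg hr0.le (sq_nonneg (1 - A))]
  have hmain : (1 - r ^ 2) * u ^ 2 < (1 - A ^ 2) * (1 - Z ^ 2) := by nlinarith
  have hAA : 0 ≤ 1 - A := by linarith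
  have hZZ : 0 ≤ 1 - Z := by linarith
  have haz1 : A * Z ≤ 1 := by nlinarith
  have h3' : 0 ≤ 3 - A - Z - A * Z := by linarith
  have e2 : (1 - A ^ 2) * (1 - Z ^ 2) ≤ 4 * ((1 - A) * (1 - Z)) := by
    nlinarith [mul_nonneg (mul_nonneg hAA hZZ) h3']
  have hr2 : 0 < 1 - r ^ 2 := by nlinarith
  have hZpos : 0 < 1 - Z := by linarith
  have hApos : 0 < 1 - A := by linarith
  refine ⟨hC, ?_, ?_⟩
  · have e1 : (1 - r ^ 2) * (1 - Z) ^ 2 ≤ (1 - r ^ 2) * u ^ 2 :=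
      mul_le_mul_of_nonneg_left (pow_le_pow_left₀ hZZ hu_z 2) hr2.le
    have key' : (1 - r ^ 2) * (1 - Z) ^ 2 < 4 * ((1 - A) * (1 - Z)) := by
      linarith [e1, hmain, e2]
    have key : ((1 - r ^ 2) * (1 - Z)) * (1 - Z) < (4 * (1 - A)) * (1 - Z) := by
      linear_combination key'
    have h4 := (mul_lt_mul_iff_of_pos_right hZpos).mp key
    linarith
  · have e1 : (1 - r ^ 2) * (1 - A) ^ 2 ≤ (1 - r ^ 2) * u ^ 2 :=
      mul_le_mul_of_nonneg_left (pow_le_pow_left₀ hAA hu_a 2) hr2.le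
    have key' : (1 - r ^ 2) * (1 - A) ^ 2 < 4 * ((1 - A) * (1 - Z)) := by
      linarith [e1, hmain, e2]
    have key : ((1 - r ^ 2) * (1 - A)) * (1 - A) < (4 * (1 - Z)) * (1 - A) := by
      linear_combination key'
    have h4 := (mul_lt_mul_iff_of_pos_right hApos).mp key
    linarith

lemma FO.pseudo_key {r : ℝ} (hr0 : 0 < r) (hr1 : r < 1) {a z : ℂ}
    (ha : ‖a‖ < 1) (hz : z ∈ pseudoDisk a r) :
    ‖a - z‖ < 2 * r / (1 - r) * (1 - ‖a‖) ∧
    (1 - r ^ 2) / 4 * (1 - ‖z‖) < 1 - ‖a‖ ∧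
    (1 - r ^ 2) / 4 * (1 - ‖a‖) < 1 - ‖z‖ := by
  obtain ⟨hz1, hz2⟩ := hz
  have hcz : ‖(starRingEnd ℂ) a * z‖ = ‖a‖ * ‖z‖ := by
    rw [norm_mul, RCLike.norm_conj]
  have hns : ‖a‖ * ‖z‖ ≤ 1 := by nlinarith [norm_nonneg a, norm_nonneg z]
  have hu_z : 1 - ‖z‖ ≤ ‖1 - (starRingEnd ℂ) a * z‖ := by
    have := norm_sub_norm_le (1 : ℂ) ((starRingEnd ℂ) a * z)
    rw [norm_one, hcz] at this
    nlinarith [norm_nonneg a, norm_nonneg z]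
  have hu_a : 1 - ‖a‖ ≤ ‖1 - (starRingEnd ℂ) a * z‖ := by
    have := norm_sub_norm_le (1 : ℂ) ((starRingEnd ℂ) a * z)
    rw [norm_one, hcz] at this
    nlinarith [norm_nonneg a, norm_nonneg z]
  have hu0 : 0 < ‖1 - (starRingEnd ℂ) a * z‖ := by linarith
  have hdru : ‖a - z‖ < r * ‖1 - (starRingEnd ℂ) a * z‖ := by
    rw [norm_div, div_lt_iff₀ hu0] at hz2
    linarith [hz2]
  have hsplit : (1 : ℂ) - (starRingEnd ℂ) a * z
      = (1 - (starRingEnd ℂ) a * a) + (starRingEnd ℂ) a * (a - z) := by ring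
  have h1aa : ‖(1 : ℂ) - (starRingEnd ℂ) a * a‖ = 1 - ‖a‖ ^ 2 := by
    have h : (starRingEnd ℂ) a * a = ((‖a‖ ^ 2 : ℝ) : ℂ) := by
      rw [mul_comm, Complex.mul_conj, Complex.normSq_eq_norm_sq]
    rw [h, ← Complex.ofReal_one, ← Complex.ofReal_sub, Complex.norm_real,
      Real.norm_of_nonneg (by nlinarith [norm_nonneg a])]
  have hu_up : ‖1 - (starRingEnd ℂ) a * z‖ ≤ (1 - ‖a‖ ^ 2) + ‖a - z‖ := by
    rw [hsplit]
    refine (norm_add_le _ _).trans ?_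
    rw [h1aa, norm_mul, RCLike.norm_conj]
    nlinarith [norm_nonneg a, norm_nonneg (a - z)]
  have hsq : ∀ w : ℂ, ‖w‖ ^ 2 = Complex.normSq w := fun w => by
    rw [Complex.sq_norm]
  have hid : ‖1 - (starRingEnd ℂ) a * z‖ ^ 2 - ‖a - z‖ ^ 2
      = (1 - ‖a‖ ^ 2) * (1 - ‖z‖ ^ 2) := by
    rw [hsq, hsq, hsq, hsq]
    simp only [Complex.normSq_apply, Complex.sub_re, Complex.sub_im, Complex.mul_re,
      Complex.mul_im, Complex.one_re, Complex.one_im, Complex.conj_re, Complex.conj_im]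
    ring
  exact FO.real_arith hr0 hr1 (norm_nonneg a) ha hz1 hu_z hu_a
    (norm_nonneg _) hdru hu_up hid (norm_nonneg z)

lemma FO.two_zpow_eq (n : ℕ) : (2 : ℝ) ^ (-(n : ℤ)) = ((2:ℝ) ^ n)⁻¹ := by
  rw [zpow_neg, zpow_natCast]

lemma FO.two_zpow_pos (n : ℕ) : 0 < (2 : ℝ) ^ (-(n : ℤ)) := by positivity

lemma FO.two_zpow_le_one (n : ℕ) : (2 : ℝ) ^ (-(n : ℤ)) ≤ 1 := by
  rw [FO.two_zpow_eq, inv_le_one_iff₀]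
  right
  exact one_le_pow₀ one_le_two

lemma FO.dyadicNet_arg (n k : ℕ) :
    2 * (Real.pi : ℂ) * Complex.I * (k : ℂ) / (2 : ℂ) ^ n
      = ((2 * Real.pi * k / 2 ^ n : ℝ) : ℂ) * Complex.I := by
  push_cast
  ring

lemma FO.dyadicNet_norm (p : ℕ × ℕ) : ‖dyadicNet p‖ = 1 - (2 : ℝ) ^ (-(p.1 : ℤ)) := by
  unfold dyadicNet
  rw [norm_mul, FO.dyadicNet_arg, Complex.norm_real, Real.norm_eq_abs,
    Complex.norm_exp_ofReal_mul_I, mul_one,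
    _root_.abs_of_nonneg (by linarith [FO.two_zpow_le_one p.1])]

lemma FO.exp_sub_one_norm_sq (θ : ℝ) :
    ‖Complex.exp ((θ : ℂ) * Complex.I) - 1‖ ^ 2 = 2 - 2 * Real.cos θ := by
  have h : Complex.exp ((θ : ℂ) * Complex.I) - 1
      = ((Real.cos θ - 1 : ℝ) : ℂ) + ((Real.sin θ : ℝ) : ℂ) * Complex.I := by
    rw [Complex.exp_mul_I, ← Complex.ofReal_cos, ← Complex.ofReal_sin]
    push_cast
    ring
  have hsq : ∀ w : ℂ, ‖w‖ ^ 2 = Complex.normSq w := fun w => by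
    rw [Complex.sq_norm]
  rw [h, hsq]
  simp only [Complex.normSq_apply, Complex.add_re, Complex.add_im, Complex.ofReal_re,
    Complex.ofReal_im, Complex.mul_re, Complex.mul_im, Complex.I_re, Complex.I_im]
  ring_nf
  linarith [Real.sin_sq_add_cos_sq θ]

lemma FO.chord_lb (x : ℝ) :
    4 * |x - round x| ≤ ‖Complex.exp (((2 * Real.pi * x : ℝ) : ℂ) * Complex.I) - 1‖ := by
  set y : ℝ := x - round x with hy
  have hy2 : |y| ≤ 1 / 2 := abs_sub_round x
  have hsin : 2 * |y| ≤ |Real.sin (Real.pi * y)| := by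
    have h1 : Real.pi * |y| ≤ Real.pi / 2 := by nlinarith [Real.pi_pos]
    have h2 := Real.mul_le_sin (mul_nonneg Real.pi_pos.le (abs_nonneg y)) h1
    have h3 : 2 / Real.pi * (Real.pi * |y|) = 2 * |y| := by
      field_simp
    rw [h3] at h2
    have habs : |Real.sin (Real.pi * y)| = Real.sin (Real.pi * |y|) := by
      rcases abs_cases y with ⟨e1, _⟩ | ⟨e1, e2⟩
      · rw [e1]
        exact _root_.abs_of_nonneg (Real.sin_nonneg_of_nonneg_of_le_pi
          (by positivity) (by nlinarith [Real.pi_pos]))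
      · rw [e1, mul_neg, Real.sin_neg, _root_.abs_of_nonpos]
        exact Real.sin_nonpos_of_nonpos_of_neg_pi_le (by nlinarith [Real.pi_pos])
          (by nlinarith [Real.pi_pos])
    rw [habs]
    exact h2
  have hcos : Real.cos (2 * Real.pi * x) = 1 - 2 * Real.sin (Real.pi * y) ^ 2 := by
    have e : 2 * Real.pi * x = 2 * (Real.pi * y) + (round x : ℤ) * (2 * Real.pi) := by
      rw [hy]; push_cast; ring
    rw [e, Real.cos_add_int_mul_two_pi, Real.cos_two_mul, Real.cos_sq']
    ring
  have hn2 : ‖Complex.exp (((2 * Real.pi * x : ℝ) : ℂ) * Complex.I) - 1‖ ^ 2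
      = 4 * Real.sin (Real.pi * y) ^ 2 := by
    rw [FO.exp_sub_one_norm_sq, hcos]; ring
  have hsq : (4 * |y|) ^ 2
      ≤ ‖Complex.exp (((2 * Real.pi * x : ℝ) : ℂ) * Complex.I) - 1‖ ^ 2 := by
    rw [hn2]
    have := pow_le_pow_left₀ (by positivity) hsin 2
    have h4 : (2 * |y|) ^ 2 ≤ Real.sin (Real.pi * y) ^ 2 := by
      rwa [_root_.sq_abs] at this
    nlinarith [h4]
  calc 4 * |y| = Real.sqrt ((4 * |y|) ^ 2) := by
        rw [Real.sqrt_sq (by positivity)]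
  _ ≤ Real.sqrt (‖Complex.exp (((2 * Real.pi * x : ℝ) : ℂ) * Complex.I) - 1‖ ^ 2) :=
      Real.sqrt_le_sqrt hsq
  _ = _ := Real.sqrt_sq (norm_nonneg _)

lemma FO.dyadic_close {n k k₀ : ℕ} (hn : 1 ≤ n) (hk : k < 2 ^ n) {C : ℝ}
    (hd : ‖dyadicNet (n, k) - dyadicNet (n, k₀)‖ < 2 * (C * (2 : ℝ) ^ (-(n : ℤ)))) :
    ∃ j : ℤ, |j| ≤ (⌈C⌉₊ : ℤ) ∧ (k : ℤ) = ((k₀ : ℤ) + j) % (2 ^ n : ℤ) := by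
  set t : ℝ := (2 : ℝ) ^ (-(n : ℤ)) with ht
  set x : ℝ := ((k : ℝ) - (k₀ : ℝ)) / 2 ^ n with hx
  have h2n : (0 : ℝ) < 2 ^ n := by positivity
  have ht2 : t * 2 ^ n = 1 := by
    rw [ht, FO.two_zpow_eq, inv_mul_cancel₀ (ne_of_gt h2n)]
  have htle : t ≤ 1 / 2 := by
    rw [ht, FO.two_zpow_eq, inv_le_comm₀ h2n (by norm_num)]
    calc ((1:ℝ)/2)⁻¹ = 2 ^ 1 := by norm_num
    _ ≤ 2 ^ n := by exact pow_le_pow_right₀ one_le_two hn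
  have hfact : dyadicNet (n, k) - dyadicNet (n, k₀)
      = ((1 - t : ℝ) : ℂ) * (Complex.exp (((2 * Real.pi * (k₀ : ℝ) / 2 ^ n : ℝ) : ℂ) * Complex.I)
        * (Complex.exp (((2 * Real.pi * x : ℝ) : ℂ) * Complex.I) - 1)) := by
    have hadd : ((2 * Real.pi * (k₀ : ℝ) / 2 ^ n : ℝ) : ℂ) * Complex.I
        + ((2 * Real.pi * x : ℝ) : ℂ) * Complex.I
        = ((2 * Real.pi * (k : ℝ) / 2 ^ n : ℝ) : ℂ) * Complex.I := by
      rw [← add_mul, ← Complex.ofReal_add]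
      congr 2
      rw [hx]
      field_simp
      ring
    show ((1 - t : ℝ) : ℂ) * _ - ((1 - t : ℝ) : ℂ) * _ = _
    rw [FO.dyadicNet_arg n k, FO.dyadicNet_arg n k₀, mul_sub, mul_one, ← Complex.exp_add, hadd]
    ring
  have hnorm : ‖dyadicNet (n, k) - dyadicNet (n, k₀)‖
      = (1 - t) * ‖Complex.exp (((2 * Real.pi * x : ℝ) : ℂ) * Complex.I) - 1‖ := by
    rw [hfact, norm_mul, norm_mul, Complex.norm_exp_ofReal_mul_I, one_mul, Complex.norm_real,
      Real.norm_of_nonneg (by linarith)]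
  have hchord := FO.chord_lb x
  have hlt : |x - round x| < C * t := by
    have h1 : (1 - t) * (4 * |x - round x|) ≤ ‖dyadicNet (n, k) - dyadicNet (n, k₀)‖ := by
      rw [hnorm]
      exact mul_le_mul_of_nonneg_left hchord (by linarith)
    nlinarith [abs_nonneg (x - round x)]
  have hlt2 : |(k : ℝ) - (k₀ : ℝ) - (round x : ℝ) * 2 ^ n| < C := by
    have h1 : |x - round x| * 2 ^ n < C * t * 2 ^ n :=
      mul_lt_mul_of_pos_right hlt h2n
    rw [mul_assoc, ht2, mul_one] at h1
    calc |(k : ℝ) - (k₀ : ℝ) - (round x : ℝ) * 2 ^ n| = |(x - round x) * 2 ^ n| := by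
          congr 1
          rw [hx]
          field_simp
    _ = |x - round x| * 2 ^ n := by rw [abs_mul, _root_.abs_of_nonneg h2n.le]
    _ < C := h1
  refine ⟨(k : ℤ) - (k₀ : ℤ) - round x * 2 ^ n, ?_, ?_⟩
  · have hcast : ((|(k : ℤ) - (k₀ : ℤ) - round x * 2 ^ n| : ℤ) : ℝ)
        = |(k : ℝ) - (k₀ : ℝ) - (round x : ℝ) * 2 ^ n| := by
      push_cast
      ring
    have : ((|(k : ℤ) - (k₀ : ℤ) - round x * 2 ^ n| : ℤ) : ℝ) < (⌈C⌉₊ : ℝ) :=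
      hcast ▸ lt_of_lt_of_le hlt2 (Nat.le_ceil C)
    exact_mod_cast this.le
  · have h : (k₀ : ℤ) + ((k : ℤ) - (k₀ : ℤ) - round x * 2 ^ n)
        = (k : ℤ) + (-(round x)) * 2 ^ n := by ring
    rw [h, Int.add_mul_emod_self_right, Int.emod_eq_of_lt (by positivity) (by exact_mod_cast hk)]

/- ---------- main theorem ---------- -/

/-- Finite overlap: for fixed `r ∈ (0,1)` there is `N` such that the sum of characteristic
functions of the pseudohyperbolic disks `D_phb(z_{n,k}, r)` is at most `N` on `D`. -/
theorem finite_overlap_of_pseudohyperbolic_disks (r : ℝ) (hr0 : 0 < r) (hr1 : r < 1) :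
    ∃ N : ℕ, ∀ z : ℂ, ‖z‖ < 1 →
      (∑' p : {q : ℕ × ℕ // q.2 < 2 ^ q.1},
          Set.indicator (pseudoDisk (dyadicNet p) r) (fun _ => (1 : ℝ≥0∞)) z) ≤ N := by
  classical
  set c : ℝ := (1 - r ^ 2) / 4 with hc
  have hc0 : 0 < c := by rw [hc]; nlinarith
  set C : ℝ := 2 * r / (1 - r) with hCdef
  have hC0 : 0 < C := by rw [hCdef]; exact div_pos (by linarith) (by linarith)
  obtain ⟨A, hA⟩ := pow_unbounded_of_one_lt (R := ℝ) (1 / c ^ 2) one_lt_two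
  set J : ℕ := ⌈C⌉₊ with hJ
  refine ⟨A * (2 * J + 1), fun z hz => ?_⟩
  set s : ℝ := 1 - ‖z‖ with hs
  have hs0 : 0 < s := by rw [hs]; linarith
  -- main counting claim
  have main : ∀ F : Finset {q : ℕ × ℕ // q.2 < 2 ^ q.1},
      (∀ p ∈ F, z ∈ pseudoDisk (dyadicNet p.val) r) → F.card ≤ A * (2 * J + 1) := by
    intro F hF
    rcases F.eq_empty_or_nonempty with hFe | hFne
    · simp [hFe]
    have hkey : ∀ p ∈ F, ‖dyadicNet p.val - z‖ < C * (2 : ℝ) ^ (-(p.val.1 : ℤ)) ∧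
        c * s < (2 : ℝ) ^ (-(p.val.1 : ℤ)) ∧ c * (2 : ℝ) ^ (-(p.val.1 : ℤ)) < s := by
      intro p hp
      have hnorm := FO.dyadicNet_norm p.val
      have ha : ‖dyadicNet p.val‖ < 1 := by
        rw [hnorm]; linarith [FO.two_zpow_pos p.val.1]
      have h := FO.pseudo_key hr0 hr1 ha (hF p hp)
      have h1a : 1 - ‖dyadicNet p.val‖ = (2 : ℝ) ^ (-(p.val.1 : ℤ)) := by
        rw [hnorm]; ring
      rw [h1a] at h
      exact ⟨h.1, h.2.1, h.2.2⟩
    -- minimal level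
    obtain ⟨q, hqF, hqmin⟩ : ∃ q ∈ F, ∀ p ∈ F, q.val.1 ≤ p.val.1 := by
      obtain ⟨q, hq, hmin⟩ := F.exists_min_image (fun p => p.val.1) hFne
      exact ⟨q, hq, hmin⟩
    set nmin := q.val.1 with hnmin
    -- level range
    have hrange : ∀ p ∈ F, p.val.1 < nmin + A := by
      intro p hp
      by_contra hge
      push_neg at hge
      have hge' : nmin + A ≤ p.val.1 := hge
      have h1 := (hkey p hp).2.1
      have h2 := (hkey q hqF).2.2
      rw [FO.two_zpow_eq] at h1 h2
      have hp1 : (0 : ℝ) < 2 ^ p.val.1 := by positivity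
      have hp2 : (0 : ℝ) < 2 ^ nmin := by positivity
      have h1' : c * s * 2 ^ p.val.1 < 1 := by
        have := mul_lt_mul_of_pos_right h1 hp1
        rwa [inv_mul_cancel₀ (ne_of_gt hp1)] at this
      have h2' : c < s * 2 ^ nmin := by
        have := mul_lt_mul_of_pos_right h2 hp2
        rwa [mul_assoc, inv_mul_cancel₀ (ne_of_gt hp2), mul_one] at this
      have epow : (2 : ℝ) ^ nmin * 2 ^ A ≤ 2 ^ p.val.1 := by
        rw [← pow_add]
        exact pow_le_pow_right₀ one_le_two hge'
      have h3 : c ^ 2 * 2 ^ p.val.1 < 2 ^ nmin := by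
        nlinarith [mul_lt_mul_of_pos_left h2' (mul_pos hc0 hp1),
          mul_lt_mul_of_pos_right h1' hp2]
      have h4 : c ^ 2 * (2 ^ nmin * 2 ^ A) ≤ c ^ 2 * 2 ^ p.val.1 :=
        mul_le_mul_of_nonneg_left epow (by positivity)
      have h5 : c ^ 2 * 2 ^ A < 1 := by
        nlinarith [h3, h4, hp2]
      have h6 : (1 : ℝ) < c ^ 2 * 2 ^ A := by
        rw [div_lt_iff₀ (by positivity)] at hA
        nlinarith [hA]
      linarith
    -- slice bound
    have hslice : ∀ m : ℕ, (F.filter (fun p => p.val.1 = m)).card ≤ 2 * J + 1 := by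
      intro m
      rcases (F.filter (fun p => p.val.1 = m)).eq_empty_or_nonempty with hG | ⟨q₀, hq₀⟩
      · rw [hG]; simp
      have hq₀F : q₀ ∈ F := (Finset.mem_filter.mp hq₀).1
      have hq₀n : q₀.val.1 = m := (Finset.mem_filter.mp hq₀).2
      rcases Nat.eq_zero_or_pos m with hm | hm
      · -- m = 0 : at most one point
        have hsub : F.filter (fun p => p.val.1 = m) ⊆ {q₀} := by
          intro p hp
          obtain ⟨hpF, hpn⟩ := Finset.mem_filter.mp hp
          rw [Finset.mem_singleton]
          apply Subtype.ext
          have hpk := p.prop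
          have hqk := q₀.prop
          rw [hpn, hm] at hpk
          rw [hq₀n, hm] at hqk
          have : p.val.2 = 0 := by omega
          have hq2 : q₀.val.2 = 0 := by omega
          apply Prod.ext
          · rw [hpn, hq₀n]
          · rw [this, hq2]
        calc (F.filter (fun p => p.val.1 = m)).card ≤ ({q₀} : Finset _).card :=
              Finset.card_le_card hsub
        _ = 1 := Finset.card_singleton _
        _ ≤ 2 * J + 1 := by omega
      · -- m ≥ 1
        have hK : ∀ p ∈ F.filter (fun p => p.val.1 = m),
            ∃ j : ℤ, |j| ≤ (J : ℤ) ∧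
              (p.val.2 : ℤ) = ((q₀.val.2 : ℤ) + j) % (2 ^ m : ℤ) := by
          intro p hp
          obtain ⟨hpF, hpn⟩ := Finset.mem_filter.mp hp
          have hpk : p.val.2 < 2 ^ m := by rw [← hpn]; exact p.prop
          have hpv : p.val = (m, p.val.2) := by rw [← hpn]
          have hqv : q₀.val = (m, q₀.val.2) := by rw [← hq₀n]
          have hd : ‖dyadicNet (m, p.val.2) - dyadicNet (m, q₀.val.2)‖
              < 2 * (C * (2 : ℝ) ^ (-(m : ℤ))) := by
            have e1 := (hkey p hpF).1
            have e2 := (hkey q₀ hq₀F).1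
            rw [hpv] at e1
            rw [hqv] at e2
            simp only at e1 e2
            calc ‖dyadicNet (m, p.val.2) - dyadicNet (m, q₀.val.2)‖
                ≤ ‖dyadicNet (m, p.val.2) - z‖ + ‖dyadicNet (m, q₀.val.2) - z‖ := by
                  have : dyadicNet (m, p.val.2) - dyadicNet (m, q₀.val.2)
                      = (dyadicNet (m, p.val.2) - z) - (dyadicNet (m, q₀.val.2) - z) := by ring
                  rw [this]
                  exact norm_sub_le _ _
            _ < 2 * (C * (2 : ℝ) ^ (-(m : ℤ))) := by
                  linarith [e1, e2]
          exact FO.dyadic_close hm hpk hd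
        have hinj : Set.InjOn (fun p : {q : ℕ × ℕ // q.2 < 2 ^ q.1} => p.val.2)
            ((F.filter (fun p => p.val.1 = m) : Finset _) : Set _) := by
          intro p hp p' hp' hpp
          simp only [Finset.coe_filter, Set.mem_setOf_eq] at hp hp'
          apply Subtype.ext
          apply Prod.ext
          · rw [hp.2, hp'.2]
          · exact hpp
        rw [← Finset.card_image_of_injOn hinj]
        have hsub : (F.filter (fun p => p.val.1 = m)).image (fun p => p.val.2)
            ⊆ (Finset.Icc (-(J : ℤ)) (J : ℤ)).image
              (fun j => (((q₀.val.2 : ℤ) + j) % (2 ^ m : ℤ)).toNat) := by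
          intro k hk
          obtain ⟨p, hpG, rfl⟩ := Finset.mem_image.mp hk
          obtain ⟨j, hj1, hj2⟩ := hK p hpG
          refine Finset.mem_image.mpr ⟨j, Finset.mem_Icc.mpr (abs_le.mp hj1), ?_⟩
          rw [← hj2, Int.toNat_natCast]
        calc ((F.filter (fun p => p.val.1 = m)).image (fun p => p.val.2)).card
            ≤ ((Finset.Icc (-(J : ℤ)) (J : ℤ)).image
              (fun j => (((q₀.val.2 : ℤ) + j) % (2 ^ m : ℤ)).toNat)).card :=
              Finset.card_le_card hsub
        _ ≤ (Finset.Icc (-(J : ℤ)) (J : ℤ)).card := Finset.card_image_le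
        _ = 2 * J + 1 := by
              rw [Int.card_Icc]
              omega
    -- combine
    have hsub : F ⊆ (Finset.range A).biUnion
        (fun i => F.filter (fun p => p.val.1 = nmin + i)) := by
      intro p hp
      rw [Finset.mem_biUnion]
      have h1 := hqmin p hp
      have h2 := hrange p hp
      refine ⟨p.val.1 - nmin, Finset.mem_range.mpr (by omega), ?_⟩
      rw [Finset.mem_filter]
      exact ⟨hp, by omega⟩
    calc F.card ≤ ((Finset.range A).biUnion
          (fun i => F.filter (fun p => p.val.1 = nmin + i))).card :=
          Finset.card_le_card hsub
    _ ≤ ∑ i ∈ Finset.range A, (F.filter (fun p => p.val.1 = nmin + i)).card :=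
          Finset.card_biUnion_le
    _ ≤ ∑ _i ∈ Finset.range A, (2 * J + 1) :=
          Finset.sum_le_sum fun i _ => hslice (nmin + i)
    _ = A * (2 * J + 1) := by rw [Finset.sum_const, Finset.card_range, smul_eq_mul]
  -- from counting to the tsum
  rw [ENNReal.tsum_eq_iSup_sum]
  refine iSup_le fun F => ?_
  have hval : ∀ p : {q : ℕ × ℕ // q.2 < 2 ^ q.1},
      Set.indicator (pseudoDisk (dyadicNet p.val) r) (fun _ => (1 : ℝ≥0∞)) z
        = if z ∈ pseudoDisk (dyadicNet p.val) r then 1 else 0 := fun p => by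
    rw [Set.indicator_apply]
  calc ∑ p ∈ F, Set.indicator (pseudoDisk (dyadicNet p.val) r) (fun _ => (1 : ℝ≥0∞)) z
      = ∑ p ∈ F.filter (fun p => z ∈ pseudoDisk (dyadicNet p.val) r), (1 : ℝ≥0∞) := by
        rw [Finset.sum_filter]
        exact Finset.sum_congr rfl fun p _ => hval p
  _ = ((F.filter (fun p => z ∈ pseudoDisk (dyadicNet p.val) r)).card : ℝ≥0∞) := by
        rw [Finset.sum_const, nsmul_eq_mul, mul_one]
  _ ≤ ((A * (2 * J + 1) : ℕ) : ℝ≥0∞) :=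
        Nat.cast_le.mpr (main _ fun p hp => (Finset.mem_filter.mp hp).2)
end
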